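/- If Q and Q' are n×n subpermutation matrices over a field F lying in the same (B_n, B_n) double coset (i.e., Q' = B Q B' for some invertible upper triangular B, B'), then Q = Q'. -/

import Mathlib

open Matrix Submodule Finset

set_option maxHeartbeats 1000000

namespace SubpermAux

variable {F : Type*} [Field F] {n : ℕ}

open scoped Classical

def Pm (F : Type*) [Field F] (n i : ℕ) : Matrix (Fin n) (Fin n) F :=
  Matrix.diagonal (fun a => if i ≤ a.1 then 1 else 0)

def Cm (F : Type*) [Field F] (n j : ℕ) : Matrix (Fin n) (Fin n) F :=
  Matrix.diagonal (fun b => if b.1 < j then 1 else 0)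

lemma Pm_idem (i : ℕ) : Pm F n i * Pm F n i = Pm F n i := by
  refine Matrix.ext fun a c => ?_
  rw [Pm, Matrix.diagonal_mul_diagonal]
  rw [Matrix.diagonal_apply, Matrix.diagonal_apply]
  split_ifs <;> simp

lemma Pm_mul_tri {B : Matrix (Fin n) (Fin n) F}
    (hB : ∀ a c : Fin n, c < a → B a c = 0) (i : ℕ) :
    Pm F n i * B * Pm F n i = Pm F n i * B := by
  ext a c
  simp only [Pm, Matrix.mul_diagonal, Matrix.diagonal_mul]
  rcases le_or_gt i (a : ℕ) with h1 | h1 <;> rcases le_or_gt i (c : ℕ) with h2 | h2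
  · simp [h1, h2]
  · rw [if_pos h1, if_neg (not_le.mpr h2), hB a c (by rw [Fin.lt_def]; omega)]; ring
  · simp [h2, not_le.mpr h1]
  · simp [not_le.mpr h1, not_le.mpr h2]

lemma tri_mul_Cm {B' : Matrix (Fin n) (Fin n) F}
    (hB' : ∀ a c : Fin n, c < a → B' a c = 0) (j : ℕ) :
    Cm F n j * (B' * Cm F n j) = B' * Cm F n j := by
  ext d b
  simp only [Cm, Matrix.mul_diagonal, Matrix.diagonal_mul]
  rcases lt_or_ge (d : ℕ) j with h1 | h1 <;> rcases lt_or_ge (b : ℕ) j with h2 | h2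
  · simp [h1, h2]
  · simp [not_lt.mpr h2]
  · rw [if_pos h2, if_neg (not_lt.mpr h1), hB' d b (by rw [Fin.lt_def]; omega)]; ring
  · simp [not_lt.mpr h2]


lemma inv_tri {B : Matrix (Fin n) (Fin n) F}
    (hB : ∀ a c : Fin n, c < a → B a c = 0) (hBu : IsUnit B) :
    ∀ a c : Fin n, c < a → B⁻¹ a c = 0 := by
  letI := hBu.invertible
  have h1 : B.BlockTriangular (id : Fin n → Fin n) := fun a c h => hB a c h
  have h2 := Matrix.blockTriangular_inv_of_blockTriangular h1
  exact fun a c h => h2 h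

lemma key_inj {B : Matrix (Fin n) (Fin n) F}
    (hB : ∀ a c : Fin n, c < a → B a c = 0) (hBu : IsUnit B) (i : ℕ) {x : Fin n → F}
    (hx : ∀ a : Fin n, (a : ℕ) < i → x a = 0)
    (h0 : (Pm F n i * B) *ᵥ x = 0) : x = 0 := by
  have hy : ∀ a : Fin n, i ≤ (a : ℕ) → (B *ᵥ x) a = 0 := by
    intro a ha
    have := congrFun h0 a
    rw [← Matrix.mulVec_mulVec] at this
    rw [Pm, Matrix.mulVec_diagonal, if_pos ha, one_mul] at this
    exact this
  have hxB : x = B⁻¹ *ᵥ (B *ᵥ x) := by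
    rw [Matrix.mulVec_mulVec, Matrix.nonsing_inv_mul B (B.isUnit_iff_isUnit_det.mp hBu),
      Matrix.one_mulVec]
  funext a
  rcases lt_or_ge (a : ℕ) i with h | h
  · exact (hx a h).trans rfl
  · rw [hxB]
    show ∑ c, B⁻¹ a c * (B *ᵥ x) c = (0 : Fin n → F) a
    rw [Pi.zero_apply]
    refine Finset.sum_eq_zero fun c _ => ?_
    rcases lt_or_ge (c : ℕ) (a : ℕ) with hc | hc
    · rw [inv_tri hB hBu a c (Fin.lt_def.mpr hc), zero_mul]
    · rw [hy c (le_trans h hc), mul_zero]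


lemma rank_conj {B Q B' : Matrix (Fin n) (Fin n) F}
    (hB : ∀ a c : Fin n, c < a → B a c = 0) (hBu : IsUnit B)
    (hB' : ∀ a c : Fin n, c < a → B' a c = 0) (hB'u : IsUnit B') (i j : ℕ) :
    (Pm F n i * (B * Q * B') * Cm F n j).rank = (Pm F n i * Q * Cm F n j).rank := by
  have hrange : LinearMap.range (B' * Cm F n j).mulVecLin
      = LinearMap.range (Cm F n j).mulVecLin := by
    apply le_antisymm
    · conv_lhs => rw [← tri_mul_Cm hB' j]
      rw [Matrix.mulVecLin_mul]
      exact LinearMap.range_comp_le_range _ _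
    · have hC : Cm F n j = (B' * Cm F n j) * (B'⁻¹ * Cm F n j) := by
        rw [Matrix.mul_assoc B', tri_mul_Cm (inv_tri hB' hB'u) j, ← Matrix.mul_assoc,
          Matrix.mul_nonsing_inv B' (B'.isUnit_iff_isUnit_det.mp hB'u), Matrix.one_mul]
      conv_lhs => rw [hC]
      rw [Matrix.mulVecLin_mul]
      exact LinearMap.range_comp_le_range _ _
  have h1 : (Pm F n i * (B * Q * B') * Cm F n j).rank
      = (Pm F n i * B * Q * Cm F n j).rank := by
    have e : Pm F n i * (B * Q * B') * Cm F n j = (Pm F n i * B * Q) * (B' * Cm F n j) := by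
      simp only [Matrix.mul_assoc]
    have hr : LinearMap.range (Pm F n i * (B * Q * B') * Cm F n j).mulVecLin
        = LinearMap.range (Pm F n i * B * Q * Cm F n j).mulVecLin := by
      rw [e, Matrix.mulVecLin_mul, LinearMap.range_comp, hrange, ← LinearMap.range_comp,
        ← Matrix.mulVecLin_mul]
    rw [Matrix.rank, Matrix.rank, hr]
  rw [h1]
  have e : Pm F n i * B * Q * Cm F n j = (Pm F n i * B) * (Pm F n i * Q * Cm F n j) := by
    calc Pm F n i * B * Q * Cm F n j
        = Pm F n i * B * Pm F n i * (Q * Cm F n j) := by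
          rw [Pm_mul_tri hB i]; simp only [Matrix.mul_assoc]
      _ = (Pm F n i * B) * (Pm F n i * Q * Cm F n j) := by simp only [Matrix.mul_assoc]
  set W := LinearMap.range (Pm F n i * Q * Cm F n j).mulVecLin with hW
  have hWx : ∀ x ∈ W, ∀ a : Fin n, (a : ℕ) < i → x a = 0 := by
    rintro x ⟨z, rfl⟩ a ha
    show (Pm F n i * Q * Cm F n j).mulVecLin z a = 0
    rw [Matrix.mulVecLin_apply, Matrix.mul_assoc, ← Matrix.mulVec_mulVec, Pm,
      Matrix.mulVec_diagonal, if_neg (not_le.mpr ha), zero_mul]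
  set f := (Pm F n i * B).mulVecLin with hf
  have hker : LinearMap.ker (f.domRestrict W) = ⊥ := by
    rw [LinearMap.ker_eq_bot']
    rintro ⟨x, hxW⟩ hfx
    refine Subtype.ext (key_inj hB hBu i (hWx x hxW) ?_)
    have hfx' : f x = 0 := by simpa using hfx
    simpa [hf, Matrix.mulVecLin_apply] using hfx'
  have hrn := LinearMap.finrank_range_add_finrank_ker (f.domRestrict W)
  rw [hker, finrank_bot, add_zero, LinearMap.range_domRestrict] at hrn
  have hmap : LinearMap.range (Pm F n i * B * Q * Cm F n j).mulVecLin = W.map f := by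
    rw [e, Matrix.mulVecLin_mul, LinearMap.range_comp]
  rw [Matrix.rank, Matrix.rank, hmap]
  exact hrn


noncomputable def cnt (M : Matrix (Fin n) (Fin n) F) (i j : ℕ) : ℕ :=
  ((univ : Finset (Fin n × Fin n)).filter fun p =>
    i ≤ (p.1 : ℕ) ∧ (p.2 : ℕ) < j ∧ M p.1 p.2 ≠ 0).card

lemma subperm_rank (R : Matrix (Fin n) (Fin n) F)
    (h01 : ∀ a b, R a b = 0 ∨ R a b = 1)
    (hrow : ∀ a b b', R a b ≠ 0 → R a b' ≠ 0 → b = b')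
    (hcol : ∀ a b a', R a b ≠ 0 → R a' b ≠ 0 → a = a') :
    R.rank = ((univ : Finset (Fin n × Fin n)).filter fun p => R p.1 p.2 ≠ 0).card := by
  set S : Finset (Fin n) := univ.filter (fun a => ∃ b, R a b ≠ 0) with hS
  -- the nonzero columns are standard basis vectors
  have hcolvec : ∀ (a b : Fin n), R a b ≠ 0 → Rᵀ b = Pi.single a 1 := by
    intro a b hab
    funext a'
    rcases eq_or_ne a' a with rfl | hne
    · rcases h01 a' b with h | h
      · exact absurd h hab
      · rw [Matrix.transpose_apply, h, Pi.single_eq_same]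
    · rw [Matrix.transpose_apply, Pi.single_eq_of_ne hne]
      by_contra h
      exact hne (hcol a' b a h hab)
  have li : LinearIndependent F (fun a : Fin n => Pi.single a (1 : F)) := by
    have h := (Pi.basisFun F (Fin n)).linearIndependent
    rwa [show ((Pi.basisFun F (Fin n)) : Fin n → Fin n → F)
      = fun a => Pi.single a 1 from funext fun a => Pi.basisFun_apply F (Fin n) a] at h
  have hspan : span F (Set.range Rᵀ)
      = span F (Set.range ((fun a : Fin n => Pi.single a (1 : F)) ∘
        ((↑) : {a // a ∈ S} → Fin n))) := by
    apply le_antisymm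
    · rw [span_le]
      rintro _ ⟨b, rfl⟩
      by_cases hb : ∃ a, R a b ≠ 0
      · obtain ⟨a, ha⟩ := hb
        rw [hcolvec a b ha]
        have haS : a ∈ S := by simp [hS]; exact ⟨b, ha⟩
        exact subset_span ⟨⟨a, haS⟩, rfl⟩
      · push_neg at hb
        have : Rᵀ b = 0 := funext fun a => hb a
        rw [this]
        exact Submodule.zero_mem _
    · rw [span_le]
      rintro _ ⟨⟨a, haS⟩, rfl⟩
      dsimp only [Function.comp]
      obtain ⟨b, hb⟩ : ∃ b, R a b ≠ 0 := by simpa [hS] using haS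
      rw [← hcolvec a b hb]
      exact subset_span ⟨b, rfl⟩
  have hcard : ((univ : Finset (Fin n × Fin n)).filter fun p => R p.1 p.2 ≠ 0).card
      = S.card := by
    apply Finset.card_bij (fun p _ => p.1)
    · intro p hp
      simp only [mem_filter, mem_univ, true_and] at hp
      simp [hS]
      exact ⟨p.2, hp⟩
    · intro p hp q hq h
      simp only [mem_filter, mem_univ, true_and] at hp hq
      rw [← h] at hq
      exact Prod.ext h (hrow p.1 p.2 q.2 hp hq)
    · intro a ha
      obtain ⟨b, hb⟩ : ∃ b, R a b ≠ 0 := by simpa [hS] using ha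
      exact ⟨(a, b), by simp [hb], rfl⟩
  have li' := li.comp ((↑) : {a // a ∈ S} → Fin n) Subtype.val_injective
  have hfr := finrank_span_eq_card li'
  rw [Matrix.rank, Matrix.range_mulVecLin, (show Set.range R.col = Set.range Rᵀ from rfl), hspan, hcard, hfr, Fintype.card_coe]

lemma rank_eq_cnt (Q : Matrix (Fin n) (Fin n) F)
    (hQ01 : ∀ a b : Fin n, Q a b = 0 ∨ Q a b = 1)
    (hQrow : ∀ a b b' : Fin n, Q a b ≠ 0 → Q a b' ≠ 0 → b = b')
    (hQcol : ∀ a b a' : Fin n, Q a b ≠ 0 → Q a' b ≠ 0 → a = a') (i j : ℕ) :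
    (Pm F n i * Q * Cm F n j).rank = cnt Q i j := by
  have hR : ∀ a b : Fin n, (Pm F n i * Q * Cm F n j) a b
      = if i ≤ (a : ℕ) ∧ (b : ℕ) < j then Q a b else 0 := by
    intro a b
    rw [Pm, Cm, Matrix.mul_diagonal, Matrix.diagonal_mul]
    rcases le_or_gt i (a : ℕ) with h1 | h1 <;> rcases lt_or_ge (b : ℕ) j with h2 | h2
    · rw [if_pos h1, if_pos h2, if_pos ⟨h1, h2⟩]; ring
    · rw [if_neg (not_lt.mpr h2), if_neg (show ¬(i ≤ (a : ℕ) ∧ (b : ℕ) < j) from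
        fun h => absurd h.2 (not_lt.mpr h2))]; ring
    · rw [if_neg (not_le.mpr h1), if_neg (show ¬(i ≤ (a : ℕ) ∧ (b : ℕ) < j) from
        fun h => absurd h.1 (not_le.mpr h1))]; ring
    · rw [if_neg (not_le.mpr h1), if_neg (show ¬(i ≤ (a : ℕ) ∧ (b : ℕ) < j) from
        fun h => absurd h.1 (not_le.mpr h1))]; ring
  have hRne : ∀ a b : Fin n, (Pm F n i * Q * Cm F n j) a b ≠ 0
      ↔ (i ≤ (a : ℕ) ∧ (b : ℕ) < j ∧ Q a b ≠ 0) := by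
    intro a b
    rw [hR a b]
    split_ifs with h
    · exact ⟨fun hq => ⟨h.1, h.2, hq⟩, fun hq => hq.2.2⟩
    · exact ⟨fun hc => absurd rfl hc, fun hq => (h ⟨hq.1, hq.2.1⟩).elim⟩
  have hmain := subperm_rank (Pm F n i * Q * Cm F n j)
    (fun a b => by rw [hR a b]; split_ifs with h; exacts [hQ01 a b, Or.inl rfl])
    (fun a b b' h1 h2 => hQrow a b b' ((hRne a b).mp h1).2.2 ((hRne a b').mp h2).2.2)
    (fun a b a' h1 h2 => hQcol a b a' ((hRne a b).mp h1).2.2 ((hRne a' b).mp h2).2.2)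
  rw [hmain, cnt]
  congr 1
  apply Finset.filter_congr
  intro p _
  simp only [hRne p.1 p.2]


noncomputable def rowcnt (M : Matrix (Fin n) (Fin n) F) (a : Fin n) (j : ℕ) : ℕ :=
  ((univ : Finset (Fin n)).filter fun b : Fin n => (b : ℕ) < j ∧ M a b ≠ 0).card

lemma cnt_eq_sum (M : Matrix (Fin n) (Fin n) F) (i j : ℕ) :
    cnt M i j = ∑ a' : Fin n, if i ≤ (a' : ℕ) then rowcnt M a' j else 0 := by
  rw [cnt, Finset.card_filter, Fintype.sum_prod_type]
  refine Finset.sum_congr rfl fun a' _ => ?_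
  by_cases h : i ≤ (a' : ℕ)
  · rw [if_pos h, rowcnt, Finset.card_filter]
    refine Finset.sum_congr rfl fun b _ => ?_
    rw [if_congr (and_iff_right h) rfl rfl]
  · rw [if_neg h]
    exact Finset.sum_eq_zero fun b _ => if_neg fun hc => h hc.1

lemma cnt_succ_row (M : Matrix (Fin n) (Fin n) F) (a : Fin n) (j : ℕ) :
    cnt M (a : ℕ) j = rowcnt M a j + cnt M ((a : ℕ) + 1) j := by
  rw [cnt_eq_sum, cnt_eq_sum,
    show (univ : Finset (Fin n)) = insert a (univ.erase a) from
      (Finset.insert_erase (mem_univ a)).symm,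
    Finset.sum_insert (Finset.notMem_erase a _), Finset.sum_insert (Finset.notMem_erase a _),
    if_pos (le_refl (a : ℕ)), if_neg (by omega), zero_add]
  congr 1
  refine Finset.sum_congr rfl fun a' ha' => ?_
  have hne : (a' : ℕ) ≠ (a : ℕ) := fun h => (Finset.ne_of_mem_erase ha') (Fin.ext h)
  rw [if_congr (show ((a : ℕ) ≤ (a' : ℕ)) ↔ ((a : ℕ) + 1 ≤ (a' : ℕ)) by omega) rfl rfl]

lemma rowcnt_succ (M : Matrix (Fin n) (Fin n) F) (a b : Fin n) :
    rowcnt M a ((b : ℕ) + 1) = rowcnt M a (b : ℕ) + (if M a b ≠ 0 then 1 else 0) := by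
  rw [rowcnt, rowcnt, Finset.card_filter, Finset.card_filter,
    show (univ : Finset (Fin n)) = insert b (univ.erase b) from
      (Finset.insert_erase (mem_univ b)).symm,
    Finset.sum_insert (Finset.notMem_erase b _), Finset.sum_insert (Finset.notMem_erase b _),
    if_congr (and_iff_right (show (b : ℕ) < (b : ℕ) + 1 by omega)) rfl rfl,
    if_neg (show ¬((b : ℕ) < (b : ℕ) ∧ M a b ≠ 0) from fun hc => absurd hc.1 (by omega))]
  have hs : ∑ b' ∈ univ.erase b, (if (b' : ℕ) < (b : ℕ) + 1 ∧ M a b' ≠ 0 then 1 else 0)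
      = ∑ b' ∈ univ.erase b, (if (b' : ℕ) < (b : ℕ) ∧ M a b' ≠ 0 then 1 else 0) := by
    refine Finset.sum_congr rfl fun b' hb' => ?_
    have hne : (b' : ℕ) ≠ (b : ℕ) := fun h => (Finset.ne_of_mem_erase hb') (Fin.ext h)
    rw [if_congr (and_congr_left' (show ((b' : ℕ) < (b : ℕ) + 1) ↔ ((b' : ℕ) < (b : ℕ))
      by omega)) rfl rfl]
  rw [hs]
  omega


end SubpermAux

/-- two subpermutation matrices in the same (B_n, B_n) double coset
are equal. -/
theorem subpermutation_double_coset_unique {F : Type*} [Field F] {n : ℕ}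
    (Q Q' : Matrix (Fin n) (Fin n) F)
    (hQ01 : ∀ i j : Fin n, Q i j = 0 ∨ Q i j = 1)
    (hQrow : ∀ i j k : Fin n, Q i j ≠ 0 → Q i k ≠ 0 → j = k)
    (hQcol : ∀ i j k : Fin n, Q i j ≠ 0 → Q k j ≠ 0 → i = k)
    (hQ'01 : ∀ i j : Fin n, Q' i j = 0 ∨ Q' i j = 1)
    (hQ'row : ∀ i j k : Fin n, Q' i j ≠ 0 → Q' i k ≠ 0 → j = k)
    (hQ'col : ∀ i j k : Fin n, Q' i j ≠ 0 → Q' k j ≠ 0 → i = k)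
    (B B' : Matrix (Fin n) (Fin n) F)
    (hB : ∀ i j : Fin n, j < i → B i j = 0) (hBu : IsUnit B)
    (hB' : ∀ i j : Fin n, j < i → B' i j = 0) (hB'u : IsUnit B')
    (hcoset : Q' = B * Q * B') :
    Q = Q' := by
  open SubpermAux in
  have hcnt : ∀ i j : ℕ, SubpermAux.cnt Q i j = SubpermAux.cnt Q' i j := by
    intro i j
    calc SubpermAux.cnt Q i j
        = (Pm F n i * Q * Cm F n j).rank := (rank_eq_cnt Q hQ01 hQrow hQcol i j).symm
      _ = (Pm F n i * (B * Q * B') * Cm F n j).rank :=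
          (rank_conj hB hBu hB' hB'u i j).symm
      _ = (Pm F n i * Q' * Cm F n j).rank := by rw [hcoset]
      _ = SubpermAux.cnt Q' i j := rank_eq_cnt Q' hQ'01 hQ'row hQ'col i j
  have hrowc : ∀ (a : Fin n) (j : ℕ), SubpermAux.rowcnt Q a j = SubpermAux.rowcnt Q' a j := by
    intro a j
    have h1 := SubpermAux.cnt_succ_row Q a j
    have h2 := SubpermAux.cnt_succ_row Q' a j
    have h3 := hcnt (a : ℕ) j
    have h4 := hcnt ((a : ℕ) + 1) j
    omega
  ext a b
  have h1 := SubpermAux.rowcnt_succ Q a b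
  have h2 := SubpermAux.rowcnt_succ Q' a b
  have h3 := hrowc a ((b : ℕ) + 1)
  have h4 := hrowc a (b : ℕ)
  rcases hQ01 a b with h | h <;> rcases hQ'01 a b with h' | h'
  · rw [h, h']
  · exfalso; rw [h] at h1; rw [h'] at h2; simp at h1 h2; omega
  · exfalso; rw [h] at h1; rw [h'] at h2; simp at h1 h2; omega
  · rw [h, h']
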